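/- Fix a ∈ (0, 1/2) and define f : 𝕋 → ℂ by f(x+iy) = min(x, 2a−x) + iy. Then f is an injective 1-Lipschitz map (|f(p)−f(q)| ≤ |p−q| for all p, q ∈ 𝕋, with equality attained, so Lip(f) = 1), f(i) = i and f(−i) = −i, and every homeomorphism F from the closed unit disk onto its image in ℂ that extends f satisfies Lip(F) > 1, i.e., there exist p, q in the closed disk with |F(p)−F(q)| > |p−q|. -/

import Mathlib

open Complex Metric Set

/-- The crescent map `f(x+iy) = min(x, 2a−x) + iy`, which reflects the part of the
unit circle with `x ≥ a` across the vertical line `x = a`. -/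
noncomputable def crescentMap (a : ℝ) (z : ℂ) : ℂ :=
  Complex.ofReal (min z.re (2 * a - z.re)) + z.im * Complex.I

lemma crescent_re (a : ℝ) (z : ℂ) : (crescentMap a z).re = min z.re (2*a - z.re) := by
  simp [crescentMap]

lemma crescent_im (a : ℝ) (z : ℂ) : (crescentMap a z).im = z.im := by
  simp [crescentMap]

lemma sq_add_sq_eq (z : ℂ) : z.re^2 + z.im^2 = ‖z‖^2 := by
  rw [Complex.sq_norm, Complex.normSq_apply]; ring

lemma norm_eq_one_of_sq (z : ℂ) (h : z.re^2 + z.im^2 = 1) : ‖z‖ = 1 := by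
  have h2 : ‖z‖^2 = 1 := by rw [← sq_add_sq_eq]; exact h
  calc ‖z‖ = Real.sqrt (‖z‖^2) := (Real.sqrt_sq (norm_nonneg z)).symm
    _ = 1 := by rw [h2, Real.sqrt_one]

lemma min_inj_aux (a x y : ℝ) (ha : 0 < a) (hsq : x^2 = y^2)
    (h : min x (2*a - x) = min y (2*a - y)) : x = y := by
  have hxy : x = y ∨ x = -y := sq_eq_sq_iff_eq_or_eq_neg.mp hsq
  rcases hxy with h' | h'
  · exact h'
  · subst h'
    rcases min_cases (-y) (2*a - -y) with ⟨e1, l1⟩ | ⟨e1, l1⟩ <;>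
      rcases min_cases y (2*a - y) with ⟨e2, l2⟩ | ⟨e2, l2⟩ <;> linarith [h, e1, e2]

/-- pinch lemma: if `w` lies in both closed balls of radius `y` centered at `c ± yi`,
then `w = c`. -/
lemma pinch (w : ℂ) (c y : ℝ)
    (h1 : dist w ((c:ℂ) + (y:ℝ) * Complex.I) ≤ y)
    (h2 : dist w ((c:ℂ) - (y:ℝ) * Complex.I) ≤ y) : w = (c:ℂ) := by
  have hy : 0 ≤ y := le_trans dist_nonneg h1
  rw [Complex.dist_eq_re_im] at h1 h2
  have e1 : (w.re - c)^2 + (w.im - y)^2 ≤ y^2 := by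
    have hnn : (0:ℝ) ≤ (w.re - ((c:ℂ) + (y:ℝ)*Complex.I).re)^2 + (w.im - ((c:ℂ) + (y:ℝ)*Complex.I).im)^2 := by positivity
    have hs := Real.sq_sqrt hnn
    have h1' : (w.re - ((c:ℂ) + (y:ℝ)*Complex.I).re)^2 + (w.im - ((c:ℂ) + (y:ℝ)*Complex.I).im)^2 ≤ y^2 := by
      nlinarith [h1, Real.sqrt_nonneg ((w.re - ((c:ℂ) + (y:ℝ)*Complex.I).re)^2 + (w.im - ((c:ℂ) + (y:ℝ)*Complex.I).im)^2)]
    simpa using h1'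
  have e2 : (w.re - c)^2 + (w.im + y)^2 ≤ y^2 := by
    have hnn : (0:ℝ) ≤ (w.re - ((c:ℂ) - (y:ℝ)*Complex.I).re)^2 + (w.im - ((c:ℂ) - (y:ℝ)*Complex.I).im)^2 := by positivity
    have hs := Real.sq_sqrt hnn
    have h2' : (w.re - ((c:ℂ) - (y:ℝ)*Complex.I).re)^2 + (w.im - ((c:ℂ) - (y:ℝ)*Complex.I).im)^2 ≤ y^2 := by
      nlinarith [h2, Real.sqrt_nonneg ((w.re - ((c:ℂ) - (y:ℝ)*Complex.I).re)^2 + (w.im - ((c:ℂ) - (y:ℝ)*Complex.I).im)^2)]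
    have hre : ((c:ℂ) - (y:ℝ)*Complex.I).re = c := by simp
    have him : ((c:ℂ) - (y:ℝ)*Complex.I).im = -y := by simp
    rw [hre, him] at h2'
    have : w.im - -y = w.im + y := by ring
    rwa [this] at h2'
  have hre0 : (w.re - c)^2 = 0 := by
    apply le_antisymm _ (sq_nonneg _)
    nlinarith [sq_nonneg (w.im - y), sq_nonneg (w.im + y)]
  have him0 : w.im = 0 := by nlinarith [sq_nonneg (w.re - c), sq_nonneg w.im]
  have hre : w.re = c := by
    have := pow_eq_zero_iff (n := 2) (by norm_num) |>.mp hre0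
    linarith
  apply Complex.ext
  · simpa using hre
  · simpa using him0

/-- Forcing lemma: a 1-Lipschitz map on the disk agreeing with the crescent map
on the circle is forced on the real diameter. -/
lemma force (a : ℝ) (F : ℂ → ℂ)
    (hF : ∀ p ∈ closedBall (0:ℂ) 1, ∀ q ∈ closedBall (0:ℂ) 1, dist (F p) (F q) ≤ dist p q)
    (heq : EqOn F (crescentMap a) (sphere (0:ℂ) 1))
    (c : ℝ) (hc : -1 ≤ c) (hc1 : c ≤ 1) :
    F (c : ℂ) = ((min c (2*a - c) : ℝ) : ℂ) := by
  set y : ℝ := Real.sqrt (1 - c^2) with hy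
  have hc2 : 0 ≤ 1 - c^2 := by nlinarith
  have hy0 : 0 ≤ y := Real.sqrt_nonneg _
  have hysq : y^2 = 1 - c^2 := Real.sq_sqrt hc2
  have hzp : ((c:ℂ) + (y:ℝ)*Complex.I) ∈ sphere (0:ℂ) 1 := by
    rw [mem_sphere_zero_iff_norm]
    apply norm_eq_one_of_sq
    simp only [Complex.add_re, Complex.ofReal_re, Complex.mul_re, Complex.I_re,
      Complex.ofReal_im, Complex.I_im, Complex.add_im, Complex.mul_im]
    ring_nf
    nlinarith [hysq]
  have hzm : ((c:ℂ) - (y:ℝ)*Complex.I) ∈ sphere (0:ℂ) 1 := by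
    rw [mem_sphere_zero_iff_norm]
    apply norm_eq_one_of_sq
    simp only [Complex.sub_re, Complex.ofReal_re, Complex.mul_re, Complex.I_re,
      Complex.ofReal_im, Complex.I_im, Complex.sub_im, Complex.mul_im]
    ring_nf
    nlinarith [hysq]
  have hcball : (c:ℂ) ∈ closedBall (0:ℂ) 1 := by
    rw [mem_closedBall_zero_iff]
    simpa using abs_le.mpr ⟨hc, hc1⟩
  have hFp := hF (c:ℂ) hcball _ (sphere_subset_closedBall hzp)
  have hFm := hF (c:ℂ) hcball _ (sphere_subset_closedBall hzm)
  rw [heq hzp] at hFp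
  rw [heq hzm] at hFm
  have hdp : dist (c:ℂ) ((c:ℂ) + (y:ℝ)*Complex.I) = y := by
    rw [Complex.dist_eq]
    have h' : (c:ℂ) - ((c:ℂ) + (y:ℝ)*Complex.I) = -((y:ℝ)*Complex.I) := by ring
    rw [h']
    simp [_root_.abs_of_nonneg hy0]
  have hdm : dist (c:ℂ) ((c:ℂ) - (y:ℝ)*Complex.I) = y := by
    rw [Complex.dist_eq]
    have h' : (c:ℂ) - ((c:ℂ) - (y:ℝ)*Complex.I) = (y:ℝ)*Complex.I := by ring
    rw [h']
    simp [_root_.abs_of_nonneg hy0]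
  have hfp : crescentMap a ((c:ℂ) + (y:ℝ)*Complex.I)
      = ((min c (2*a - c) : ℝ):ℂ) + (y:ℝ)*Complex.I := by
    apply Complex.ext <;> simp [crescent_re, crescent_im]
  have hfm : crescentMap a ((c:ℂ) - (y:ℝ)*Complex.I)
      = ((min c (2*a - c) : ℝ):ℂ) - (y:ℝ)*Complex.I := by
    apply Complex.ext <;> simp [crescent_re, crescent_im]
  rw [hfp, hdp] at hFp
  rw [hfm, hdm] at hFm
  exact pinch _ _ _ hFp hFm

/-- **Example 5.2 (crescent).** Fix `a ∈ (0, 1/2)` and let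
`f(x+iy) = min(x, 2a−x) + iy`.  Then `f` is injective and 1-Lipschitz on the unit
circle (with the Lipschitz constant attained, so `Lip(f) = 1`), `f(±i) = ±i`, and every
homeomorphism `F` of the closed unit disk onto its image extending `f` satisfies
`Lip(F) > 1`: some pair of points has `|F p − F q| > |p − q|`. -/
theorem crescent_no_isometric_extension (a : ℝ) (ha0 : 0 < a) (ha1 : a < 1 / 2) :
    InjOn (crescentMap a) (sphere (0:ℂ) 1) ∧
    (∀ p ∈ sphere (0:ℂ) 1, ∀ q ∈ sphere (0:ℂ) 1,
      dist (crescentMap a p) (crescentMap a q) ≤ dist p q) ∧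
    (∃ p ∈ sphere (0:ℂ) 1, ∃ q ∈ sphere (0:ℂ) 1, p ≠ q ∧
      dist (crescentMap a p) (crescentMap a q) = dist p q) ∧
    crescentMap a Complex.I = Complex.I ∧
    crescentMap a (-Complex.I) = -Complex.I ∧
    ∀ F : ℂ → ℂ, ContinuousOn F (closedBall (0:ℂ) 1) →
      InjOn F (closedBall (0:ℂ) 1) →
      EqOn F (crescentMap a) (sphere (0:ℂ) 1) →
      ∃ p ∈ closedBall (0:ℂ) 1, ∃ q ∈ closedBall (0:ℂ) 1,
        dist p q < dist (F p) (F q) := by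
  have hIfix : crescentMap a Complex.I = Complex.I := by
    apply Complex.ext
    · rw [crescent_re]; simp; linarith
    · rw [crescent_im]
  have hmIfix : crescentMap a (-Complex.I) = -Complex.I := by
    apply Complex.ext
    · rw [crescent_re]; simp; linarith
    · rw [crescent_im]
  refine ⟨?_, ?_, ?_, hIfix, hmIfix, ?_⟩
  · -- injectivity
    intro p hp q hq h
    have him : p.im = q.im := by
      have := congrArg Complex.im h
      rwa [crescent_im, crescent_im] at this
    have hre : min p.re (2*a - p.re) = min q.re (2*a - q.re) := by
      have := congrArg Complex.re h
      rwa [crescent_re, crescent_re] at this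
    have hp1 : p.re^2 + p.im^2 = 1 := by
      rw [sq_add_sq_eq, mem_sphere_zero_iff_norm.mp hp]; norm_num
    have hq1 : q.re^2 + q.im^2 = 1 := by
      rw [sq_add_sq_eq, mem_sphere_zero_iff_norm.mp hq]; norm_num
    have himsq : p.im^2 = q.im^2 := by rw [him]
    have hsq : p.re^2 = q.re^2 := by linarith
    exact Complex.ext (min_inj_aux a p.re q.re ha0 hsq hre) him
  · -- 1-Lipschitz
    intro p _ q _
    rw [Complex.dist_eq_re_im, Complex.dist_eq_re_im, crescent_re, crescent_re,
      crescent_im, crescent_im]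
    apply Real.sqrt_le_sqrt
    have : (min p.re (2*a - p.re) - min q.re (2*a - q.re))^2 ≤ (p.re - q.re)^2 := by
      rcases min_cases p.re (2*a - p.re) with ⟨e1, l1⟩ | ⟨e1, l1⟩ <;>
        rcases min_cases q.re (2*a - q.re) with ⟨e2, l2⟩ | ⟨e2, l2⟩ <;>
        rw [e1, e2] <;> nlinarith
    linarith
  · -- equality attained at I, -I
    refine ⟨Complex.I, ?_, -Complex.I, ?_, ?_, ?_⟩
    · rw [mem_sphere_zero_iff_norm]; simp
    · rw [mem_sphere_zero_iff_norm]; simp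
    · intro h
      have := congrArg Complex.im h
      norm_num at this
    · rw [hIfix, hmIfix]
  · -- no isometric extension
    intro F _ hinj heq
    by_contra hcon
    push_neg at hcon
    have hF : ∀ p ∈ closedBall (0:ℂ) 1, ∀ q ∈ closedBall (0:ℂ) 1,
        dist (F p) (F q) ≤ dist p q := by
      intro p hp q hq
      exact not_lt.mp (by simpa using hcon p hp q hq)
    set x : ℝ := (a + 1) / 2 with hx
    set c : ℝ := 2*a - x with hc
    have hxa : a < x := by rw [hx]; linarith
    have hx1 : x < 1 := by rw [hx]; linarith
    have hca : c < a := by rw [hc]; linarith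
    have hcm1 : -1 < c := by rw [hc, hx]; linarith
    have hFx : F (x:ℂ) = ((min x (2*a - x) : ℝ):ℂ) :=
      force a F hF heq x (by linarith) (by linarith)
    have hFc : F (c:ℂ) = ((min c (2*a - c) : ℝ):ℂ) :=
      force a F hF heq c (by linarith) (by linarith)
    have hminx : min x (2*a - x) = c := by rw [hc]; exact min_eq_right (by linarith)
    have hminc : min c (2*a - c) = c := by apply min_eq_left; linarith
    rw [hminx] at hFx
    rw [hminc] at hFc
    have hxball : (x:ℂ) ∈ closedBall (0:ℂ) 1 := by
      rw [mem_closedBall_zero_iff]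
      simpa using abs_le.mpr ⟨by linarith, le_of_lt hx1⟩
    have hcball : (c:ℂ) ∈ closedBall (0:ℂ) 1 := by
      rw [mem_closedBall_zero_iff]
      simpa using abs_le.mpr ⟨le_of_lt hcm1, by linarith⟩
    have hxc' : (x:ℂ) = (c:ℂ) := hinj hxball hcball (by rw [hFx, hFc])
    have hxc : x = c := by exact_mod_cast hxc'
    rw [hc] at hxc
    linarith
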